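/- Knabe bound for complete graphs: Let H = Σ_{1≤i<j≤n} h_{i,j} be a sum of orthogonal projectors on a finite-dimensional Hilbert space, and suppose for each m-element subset T of {1,…,n} (for a fixed m with 3 ≤ m ≤ n) one has (Σ_{{i,j}⊆T} h_{i,j})² ≥ Δ_m · Σ_{{i,j}⊆T} h_{i,j}. Then H² ≥ [((n−2)/(m−2))(Δ_m − (n−m)/(n−2))] H, and hence the spectral gap of H is at least ((n−2)/(m−2))(Δ_m − (n−m)/(n−2)). -/

import Mathlib

open ComplexOrder

section Helpers

open Matrix Finset

lemma count_supersets {α : Type*} [DecidableEq α] [Fintype α] {m : ℕ} (S : Finset α)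
    (hs : S.card ≤ m) :
    (((Finset.powersetCard m (Finset.univ : Finset α))).filter (fun T => S ⊆ T)).card
      = (Fintype.card α - S.card).choose (m - S.card) := by
  rw [← Finset.card_compl S, ← Finset.card_powersetCard]
  apply Finset.card_nbij' (fun T => T \ S) (fun U => U ∪ S)
  · intro T hT
    simp only [Finset.mem_coe, Finset.mem_filter, Finset.mem_powersetCard] at hT ⊢
    obtain ⟨⟨-, hc⟩, hsub⟩ := hT
    constructor
    · intro x hx
      simp only [Finset.mem_sdiff] at hx
      simp [Finset.mem_compl, hx.2]
    · rw [Finset.card_sdiff_of_subset hsub, hc]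
  · intro U hU
    simp only [Finset.mem_coe, Finset.mem_powersetCard] at hU
    obtain ⟨hsub, hc⟩ := hU
    have hdisj : Disjoint U S := by
      rw [Finset.disjoint_left]; intro x hx hxS
      exact (Finset.mem_compl.mp (hsub hx)) hxS
    simp only [Finset.mem_coe, Finset.mem_filter, Finset.mem_powersetCard]
    refine ⟨⟨Finset.subset_univ _, ?_⟩, Finset.subset_union_right⟩
    rw [Finset.card_union_of_disjoint hdisj, hc]
    omega
  · intro T hT
    simp only [Finset.mem_coe, Finset.mem_filter, Finset.mem_powersetCard] at hT
    exact Finset.sdiff_union_of_subset hT.2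
  · intro U hU
    simp only [Finset.mem_coe, Finset.mem_powersetCard] at hU
    have hdisj : Disjoint U S := by
      rw [Finset.disjoint_left]; intro x hx hxS
      exact (Finset.mem_compl.mp (hU.1 hx)) hxS
    dsimp only
    rw [Finset.union_sdiff_right, Finset.sdiff_eq_self_of_disjoint hdisj]

lemma count_pair {n m : ℕ} (hm : 2 ≤ m) {x y : Fin n} (hxy : x ≠ y) :
    ((Finset.powersetCard m (Finset.univ : Finset (Fin n))).filter
      (fun T => x ∈ T ∧ y ∈ T)).card = (n - 2).choose (m - 2) := by
  have h2 : ({x, y} : Finset (Fin n)).card = 2 := by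
    rw [Finset.card_insert_of_notMem (by simp [hxy]), Finset.card_singleton]
  rw [Finset.filter_congr (fun T _ => by
    simp [Finset.insert_subset_iff] : ∀ T ∈ Finset.powersetCard m (Finset.univ : Finset (Fin n)),
      (x ∈ T ∧ y ∈ T) ↔ ({x, y} : Finset (Fin n)) ⊆ T),
    count_supersets _ (h2 ▸ hm), h2, Fintype.card_fin]

lemma count_triple {n m : ℕ} (hm : 3 ≤ m) {x y z : Fin n} (hxy : x ≠ y) (hxz : x ≠ z)
    (hyz : y ≠ z) :
    ((Finset.powersetCard m (Finset.univ : Finset (Fin n))).filter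
      (fun T => x ∈ T ∧ y ∈ T ∧ z ∈ T)).card = (n - 3).choose (m - 3) := by
  have h3 : ({x, y, z} : Finset (Fin n)).card = 3 := by
    rw [Finset.card_insert_of_notMem (by simp [hxy, hxz]),
      Finset.card_insert_of_notMem (by simp [hyz]), Finset.card_singleton]
  rw [Finset.filter_congr (fun T _ => by
    simp [Finset.insert_subset_iff] : ∀ T ∈ Finset.powersetCard m (Finset.univ : Finset (Fin n)),
      (x ∈ T ∧ y ∈ T ∧ z ∈ T) ↔ ({x, y, z} : Finset (Fin n)) ⊆ T),
    count_supersets _ (h3 ▸ hm), h3, Fintype.card_fin]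

lemma count_overlap {n m : ℕ} (hm : 3 ≤ m) {p q : Fin n × Fin n} (hp : p.1 < p.2)
    (hq : q.1 < q.2) (hne : p ≠ q)
    (hnd : ¬(p.1 ≠ q.1 ∧ p.1 ≠ q.2 ∧ p.2 ≠ q.1 ∧ p.2 ≠ q.2)) :
    ((Finset.powersetCard m (Finset.univ : Finset (Fin n))).filter
      (fun T => (p.1 ∈ T ∧ p.2 ∈ T) ∧ (q.1 ∈ T ∧ q.2 ∈ T))).card
      = (n - 3).choose (m - 3) := by
  push_neg at hnd
  have hne' : ¬(p.1 = q.1 ∧ p.2 = q.2) := fun hc => hne (Prod.ext hc.1 hc.2)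
  rw [not_and_or] at hne'
  by_cases h11 : p.1 = q.1
  · have h22 : p.2 ≠ q.2 := by tauto
    rw [Finset.filter_congr (fun T _ => (by rw [← h11]; tauto :
      ((p.1 ∈ T ∧ p.2 ∈ T) ∧ (q.1 ∈ T ∧ q.2 ∈ T)) ↔ (p.1 ∈ T ∧ p.2 ∈ T ∧ q.2 ∈ T)))]
    exact count_triple hm (ne_of_lt hp) (h11 ▸ hq.ne) h22
  by_cases h12 : p.1 = q.2
  · have hlt : q.1 < p.1 := h12 ▸ hq
    rw [Finset.filter_congr (fun T _ => (by rw [← h12]; tauto :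
      ((p.1 ∈ T ∧ p.2 ∈ T) ∧ (q.1 ∈ T ∧ q.2 ∈ T)) ↔ (q.1 ∈ T ∧ p.1 ∈ T ∧ p.2 ∈ T)))]
    exact count_triple hm (ne_of_lt hlt) (ne_of_lt (hlt.trans hp)) (ne_of_lt hp)
  by_cases h21 : p.2 = q.1
  · have hlt : p.2 < q.2 := h21 ▸ hq
    rw [Finset.filter_congr (fun T _ => (by rw [← h21]; tauto :
      ((p.1 ∈ T ∧ p.2 ∈ T) ∧ (q.1 ∈ T ∧ q.2 ∈ T)) ↔ (p.1 ∈ T ∧ p.2 ∈ T ∧ q.2 ∈ T)))]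
    exact count_triple hm (ne_of_lt hp) (ne_of_lt (hp.trans hlt)) (ne_of_lt hlt)
  · have h22 : p.2 = q.2 := by tauto
    have h1q1 : p.1 ≠ q.1 := by tauto
    rw [Finset.filter_congr (fun T _ => (by rw [← h22]; tauto :
      ((p.1 ∈ T ∧ p.2 ∈ T) ∧ (q.1 ∈ T ∧ q.2 ∈ T)) ↔ (p.1 ∈ T ∧ p.2 ∈ T ∧ q.1 ∈ T)))]
    exact count_triple hm (ne_of_lt hp) h1q1 (h22 ▸ hq).ne'

lemma count_quad_le {n m : ℕ} (hm : 3 ≤ m) {p q : Fin n × Fin n} (hp : p.1 < p.2)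
    (h1 : p.1 ≠ q.1) (h2 : p.2 ≠ q.1) :
    ((Finset.powersetCard m (Finset.univ : Finset (Fin n))).filter
      (fun T => (p.1 ∈ T ∧ p.2 ∈ T) ∧ (q.1 ∈ T ∧ q.2 ∈ T))).card
      ≤ (n - 3).choose (m - 3) := by
  refine le_trans (Finset.card_le_card (Finset.monotone_filter_right _ ?_))
    (le_of_eq (count_triple hm (ne_of_lt hp) h1 h2))
  intro T _ ht
  exact ⟨ht.1.1, ht.1.2, ht.2.1⟩

lemma psd_smul_real {N : ℕ} {M : Matrix (Fin N) (Fin N) ℂ} (hM : M.PosSemidef) {r : ℝ}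
    (hr : 0 ≤ r) : ((r : ℂ) • M).PosSemidef := by
  refine Matrix.PosSemidef.of_dotProduct_mulVec_nonneg ?_ ?_
  · show ((r:ℂ) • M)ᴴ = (r:ℂ) • M
    rw [Matrix.conjTranspose_smul, Complex.star_def, Complex.conj_ofReal, hM.1]
  · intro x
    rw [Matrix.smul_mulVec, dotProduct_smul, smul_eq_mul]
    exact mul_nonneg (Complex.zero_le_real.2 hr) (hM.dotProduct_mulVec_nonneg x)

lemma psd_mul_of_commute {N : ℕ} {A B : Matrix (Fin N) (Fin N) ℂ} (hA : A.IsHermitian)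
    (hA2 : A * A = A) (hB : B.IsHermitian) (hB2 : B * B = B) (hAB : Commute A B) :
    (A * B).PosSemidef := by
  have hBpsd : B.PosSemidef := by
    have := Matrix.posSemidef_conjTranspose_mul_self B
    rwa [hB.eq, hB2] at this
  have hkey : A * B = A * B * Aᴴ := by
    rw [hA.eq, mul_assoc, ← hAB.eq, ← mul_assoc, hA2]
  rw [hkey]
  exact hBpsd.mul_mul_conjTranspose_same A

lemma psd_sum {N : ℕ} {ι : Type*} (s : Finset ι) (f : ι → Matrix (Fin N) (Fin N) ℂ)
    (hf : ∀ i ∈ s, (f i).PosSemidef) : (∑ i ∈ s, f i).PosSemidef := by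
  exact Finset.sum_induction f (fun M => M.PosSemidef) (fun a b ha hb => ha.add hb)
    Matrix.PosSemidef.zero hf

lemma sum_ite_card {N : ℕ} {ι : Type*} [DecidableEq ι] (s : Finset ι) (C : ι → Prop)
    [DecidablePred C] (M : Matrix (Fin N) (Fin N) ℂ) :
    ∑ T ∈ s, (if C T then M else 0) = ((s.filter C).card : ℂ) • M := by
  rw [Finset.sum_ite, Finset.sum_const, Finset.sum_const_zero, add_zero,
    Nat.cast_smul_eq_nsmul]

lemma sum_sq_swap {N n : ℕ} (m : ℕ) (h : Fin n × Fin n → Matrix (Fin N) (Fin N) ℂ)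
    (E : Finset (Fin n × Fin n)) :
    ∑ T ∈ Finset.powersetCard m (Finset.univ : Finset (Fin n)),
      ((∑ p ∈ E.filter (fun p => p.1 ∈ T ∧ p.2 ∈ T), h p) *
        (∑ q ∈ E.filter (fun q => q.1 ∈ T ∧ q.2 ∈ T), h q))
    = ∑ p ∈ E, ∑ q ∈ E,
        ((((Finset.powersetCard m (Finset.univ : Finset (Fin n))).filter
          (fun T => (p.1 ∈ T ∧ p.2 ∈ T) ∧ (q.1 ∈ T ∧ q.2 ∈ T))).card : ℂ) • (h p * h q)) := by
  have step1 : ∀ T : Finset (Fin n),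
      (∑ p ∈ E.filter (fun p => p.1 ∈ T ∧ p.2 ∈ T), h p) *
        (∑ q ∈ E.filter (fun q => q.1 ∈ T ∧ q.2 ∈ T), h q)
      = ∑ p ∈ E, ∑ q ∈ E,
          (if (p.1 ∈ T ∧ p.2 ∈ T) ∧ (q.1 ∈ T ∧ q.2 ∈ T) then h p * h q else 0) := by
    intro T
    rw [Finset.sum_mul_sum]
    rw [Finset.sum_filter]
    refine Finset.sum_congr rfl fun p _ => ?_
    by_cases hP : p.1 ∈ T ∧ p.2 ∈ T
    · simp only [hP, if_true, true_and, Finset.sum_filter]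
    · simp [hP]
  calc ∑ T ∈ Finset.powersetCard m (Finset.univ : Finset (Fin n)),
      ((∑ p ∈ E.filter (fun p => p.1 ∈ T ∧ p.2 ∈ T), h p) *
        (∑ q ∈ E.filter (fun q => q.1 ∈ T ∧ q.2 ∈ T), h q))
      = ∑ T ∈ Finset.powersetCard m (Finset.univ : Finset (Fin n)), ∑ p ∈ E, ∑ q ∈ E,
          (if (p.1 ∈ T ∧ p.2 ∈ T) ∧ (q.1 ∈ T ∧ q.2 ∈ T) then h p * h q else 0) :=
        Finset.sum_congr rfl fun T _ => step1 T
    _ = ∑ p ∈ E, ∑ T ∈ Finset.powersetCard m (Finset.univ : Finset (Fin n)), ∑ q ∈ E,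
          (if (p.1 ∈ T ∧ p.2 ∈ T) ∧ (q.1 ∈ T ∧ q.2 ∈ T) then h p * h q else 0) :=
        Finset.sum_comm
    _ = ∑ p ∈ E, ∑ q ∈ E, ∑ T ∈ Finset.powersetCard m (Finset.univ : Finset (Fin n)),
          (if (p.1 ∈ T ∧ p.2 ∈ T) ∧ (q.1 ∈ T ∧ q.2 ∈ T) then h p * h q else 0) :=
        Finset.sum_congr rfl fun p _ => Finset.sum_comm
    _ = _ := Finset.sum_congr rfl fun p _ => Finset.sum_congr rfl fun q _ =>
        sum_ite_card _ _ _

lemma sum_lin_swap {N n : ℕ} (m : ℕ) (h : Fin n × Fin n → Matrix (Fin N) (Fin N) ℂ)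
    (E : Finset (Fin n × Fin n)) :
    ∑ T ∈ Finset.powersetCard m (Finset.univ : Finset (Fin n)),
      (∑ p ∈ E.filter (fun p => p.1 ∈ T ∧ p.2 ∈ T), h p)
    = ∑ p ∈ E,
        ((((Finset.powersetCard m (Finset.univ : Finset (Fin n))).filter
          (fun T => p.1 ∈ T ∧ p.2 ∈ T)).card : ℂ) • h p) := by
  calc ∑ T ∈ Finset.powersetCard m (Finset.univ : Finset (Fin n)),
      (∑ p ∈ E.filter (fun p => p.1 ∈ T ∧ p.2 ∈ T), h p)
      = ∑ T ∈ Finset.powersetCard m (Finset.univ : Finset (Fin n)), ∑ p ∈ E,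
          (if p.1 ∈ T ∧ p.2 ∈ T then h p else 0) :=
        Finset.sum_congr rfl fun T _ => Finset.sum_filter _ _
    _ = ∑ p ∈ E, ∑ T ∈ Finset.powersetCard m (Finset.univ : Finset (Fin n)),
          (if p.1 ∈ T ∧ p.2 ∈ T then h p else 0) := Finset.sum_comm
    _ = _ := Finset.sum_congr rfl fun p _ => sum_ite_card _ _ _

end Helpers

/-- Knabe bound for complete graphs: if `H = ∑_{i<j} h_{i,j}` is a sum of projectors
(terms on disjoint edges commuting), and for every `m`-element subset `T` of `{1,…,n}`
`(∑_{{i,j}⊆T} h_{i,j})² ≥ Δm · ∑_{{i,j}⊆T} h_{i,j}`, then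
`H² ≥ ((n−2)/(m−2))(Δm − (n−m)/(n−2)) · H`, hence every nonzero eigenvalue of `H`
(in particular the spectral gap) is at least `((n−2)/(m−2))(Δm − (n−m)/(n−2))`. -/
theorem stmt4 {N : ℕ} (n m : ℕ) (hm : 3 ≤ m) (hmn : m ≤ n)
    (h : Fin n → Fin n → Matrix (Fin N) (Fin N) ℂ)
    (hproj : ∀ i j : Fin n, i < j → (h i j).IsHermitian ∧ h i j * h i j = h i j)
    (hcomm : ∀ i j k l : Fin n, i < j → k < l → i ≠ k → i ≠ l → j ≠ k → j ≠ l →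
      Commute (h i j) (h k l))
    (Δm : ℝ)
    (hsub : ∀ T ∈ Finset.powersetCard m (Finset.univ : Finset (Fin n)),
      ((∑ p ∈ Finset.univ.filter (fun p : Fin n × Fin n => p.1 < p.2 ∧ p.1 ∈ T ∧ p.2 ∈ T),
          h p.1 p.2)
        * (∑ p ∈ Finset.univ.filter (fun p : Fin n × Fin n => p.1 < p.2 ∧ p.1 ∈ T ∧ p.2 ∈ T),
            h p.1 p.2)
        - ((Δm : ℂ)) •
          (∑ p ∈ Finset.univ.filter (fun p : Fin n × Fin n => p.1 < p.2 ∧ p.1 ∈ T ∧ p.2 ∈ T),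
            h p.1 p.2)).PosSemidef)
    (hHerm : (∑ p ∈ Finset.univ.filter (fun p : Fin n × Fin n => p.1 < p.2),
        h p.1 p.2).IsHermitian) :
    ((∑ p ∈ Finset.univ.filter (fun p : Fin n × Fin n => p.1 < p.2), h p.1 p.2)
      * (∑ p ∈ Finset.univ.filter (fun p : Fin n × Fin n => p.1 < p.2), h p.1 p.2)
      - (((((n : ℝ) - 2) / ((m : ℝ) - 2) * (Δm - ((n : ℝ) - (m : ℝ)) / ((n : ℝ) - 2)) : ℝ) : ℂ))
          • (∑ p ∈ Finset.univ.filter (fun p : Fin n × Fin n => p.1 < p.2),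
              h p.1 p.2)).PosSemidef
    ∧ ∀ i, hHerm.eigenvalues i ≠ 0 →
        ((n : ℝ) - 2) / ((m : ℝ) - 2) * (Δm - ((n : ℝ) - (m : ℝ)) / ((n : ℝ) - 2))
          ≤ hHerm.eigenvalues i := by
  classical
  set c : ℝ := ((n : ℝ) - 2) / ((m : ℝ) - 2) * (Δm - ((n : ℝ) - (m : ℝ)) / ((n : ℝ) - 2))
    with hc
  set E : Finset (Fin n × Fin n) := Finset.univ.filter (fun p : Fin n × Fin n => p.1 < p.2)
    with hEdef
  set H : Matrix (Fin N) (Fin N) ℂ := ∑ p ∈ E, h p.1 p.2 with hHdef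
  have hmemE : ∀ p : Fin n × Fin n, p ∈ E ↔ p.1 < p.2 := by
    intro p; simp [hEdef]
  -- basic numeric facts
  have hn3 : 3 ≤ n := le_trans hm hmn
  set a : ℕ := (n - 2).choose (m - 2) with ha
  set b : ℕ := (n - 3).choose (m - 3) with hb
  have hbpos : 0 < b := Nat.choose_pos (by omega)
  set 𝒯 := Finset.powersetCard m (Finset.univ : Finset (Fin n)) with hT
  -- the subset Hamiltonians
  have hEfil : ∀ T : Finset (Fin n),
      Finset.univ.filter (fun p : Fin n × Fin n => p.1 < p.2 ∧ p.1 ∈ T ∧ p.2 ∈ T)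
        = E.filter (fun p => p.1 ∈ T ∧ p.2 ∈ T) := by
    intro T
    rw [hEdef, Finset.filter_filter]
  -- Claim S1
  have S1 : ∑ T ∈ 𝒯, ((∑ p ∈ E.filter (fun p => p.1 ∈ T ∧ p.2 ∈ T), h p.1 p.2) *
        (∑ q ∈ E.filter (fun q => q.1 ∈ T ∧ q.2 ∈ T), h q.1 q.2))
      = ∑ p ∈ E, ∑ q ∈ E, (((𝒯.filter
          (fun T => (p.1 ∈ T ∧ p.2 ∈ T) ∧ (q.1 ∈ T ∧ q.2 ∈ T))).card : ℂ) •
          (h p.1 p.2 * h q.1 q.2)) :=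
    sum_sq_swap m (fun p => h p.1 p.2) E
  -- Claim S2
  have S2 : ∑ T ∈ 𝒯, (∑ p ∈ E.filter (fun p => p.1 ∈ T ∧ p.2 ∈ T), h p.1 p.2)
      = ∑ p ∈ E, ((a : ℂ) • h p.1 p.2) := by
    rw [sum_lin_swap m (fun p => h p.1 p.2) E]
    refine Finset.sum_congr rfl fun p hp => ?_
    rw [count_pair (by omega) (ne_of_lt ((hmemE p).1 hp))]
  -- key real arithmetic
  have hab : ((n : ℝ) - 2) * b = a * ((m : ℝ) - 2) := by
    have hnat : (n - 2) * b = a * (m - 2) := by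
      have key := Nat.add_one_mul_choose_eq (n - 3) (m - 3)
      rw [ha, hb]
      have e1 : n - 3 + 1 = n - 2 := by omega
      have e2 : m - 3 + 1 = m - 2 := by omega
      rw [e1, e2] at key
      exact key
    have := congrArg (fun k : ℕ => (k : ℝ)) hnat
    push_cast [Nat.cast_sub (show 2 ≤ n by omega), Nat.cast_sub (show 2 ≤ m by omega)] at this
    exact this
  have harith : (b : ℝ) * c = Δm * a + b - a := by
    have hm2 : ((m : ℝ) - 2) ≠ 0 := by
      have : (3 : ℝ) ≤ (m : ℝ) := by exact_mod_cast hm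
      linarith
    have hn2 : ((n : ℝ) - 2) ≠ 0 := by
      have : (3 : ℝ) ≤ (n : ℝ) := by exact_mod_cast hn3
      linarith
    rw [hc]
    field_simp
    linear_combination (Δm - 1) * hab
  -- coefficient combination
  have hcoef : ∀ p ∈ E, ∀ q ∈ E,
      ((((𝒯.filter (fun T => (p.1 ∈ T ∧ p.2 ∈ T) ∧ (q.1 ∈ T ∧ q.2 ∈ T))).card : ℂ))
        + (if (p.1 ≠ q.1 ∧ p.1 ≠ q.2 ∧ p.2 ≠ q.1 ∧ p.2 ≠ q.2) then
            (((b - (𝒯.filter (fun T => (p.1 ∈ T ∧ p.2 ∈ T) ∧ (q.1 ∈ T ∧ q.2 ∈ T))).card : ℕ)) : ℂ)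
          else 0))
      = (b : ℂ) + (if p = q then ((a : ℂ) - (b : ℂ)) else 0) := by
    intro p hp q hq
    have hplt := (hmemE p).1 hp
    have hqlt := (hmemE q).1 hq
    by_cases hpq : p = q
    · subst hpq
      rw [if_pos rfl, if_neg (by simp)]
      rw [Finset.filter_congr (fun T _ => (by tauto :
        ((p.1 ∈ T ∧ p.2 ∈ T) ∧ (p.1 ∈ T ∧ p.2 ∈ T)) ↔ (p.1 ∈ T ∧ p.2 ∈ T)))]
      rw [count_pair (by omega) (ne_of_lt hplt)]
      push_cast
      ring
    · by_cases hD4 : (p.1 ≠ q.1 ∧ p.1 ≠ q.2 ∧ p.2 ≠ q.1 ∧ p.2 ≠ q.2)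
      · rw [if_pos hD4, if_neg hpq,
          Nat.cast_sub (count_quad_le hm hplt hD4.1 hD4.2.2.1)]
        push_cast
        ring
      · rw [if_neg hD4, if_neg hpq, count_overlap hm hplt hqlt hpq hD4]
  -- the positive remainder term
  set D : Matrix (Fin N) (Fin N) ℂ := ∑ p ∈ E, ∑ q ∈ E,
      ((if (p.1 ≠ q.1 ∧ p.1 ≠ q.2 ∧ p.2 ≠ q.1 ∧ p.2 ≠ q.2) then
          (((b - (𝒯.filter (fun T => (p.1 ∈ T ∧ p.2 ∈ T) ∧ (q.1 ∈ T ∧ q.2 ∈ T))).card : ℕ)) : ℂ)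
        else 0) • (h p.1 p.2 * h q.1 q.2)) with hDdef
  -- the key identity
  have key : (∑ T ∈ 𝒯, ((∑ p ∈ E.filter (fun p => p.1 ∈ T ∧ p.2 ∈ T), h p.1 p.2) *
        (∑ q ∈ E.filter (fun q => q.1 ∈ T ∧ q.2 ∈ T), h q.1 q.2)
        - (Δm : ℂ) • (∑ p ∈ E.filter (fun p => p.1 ∈ T ∧ p.2 ∈ T), h p.1 p.2))) + D
      = ((b : ℂ)) • (H * H) - ((((b : ℝ) * c : ℝ)) : ℂ) • H := by
    rw [Finset.sum_sub_distrib, ← Finset.smul_sum, S1, S2, hDdef]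
    rw [sub_add_eq_add_sub, ← Finset.sum_add_distrib]
    have step2 : ∑ p ∈ E, (∑ q ∈ E, (((𝒯.filter
          (fun T => (p.1 ∈ T ∧ p.2 ∈ T) ∧ (q.1 ∈ T ∧ q.2 ∈ T))).card : ℂ) •
          (h p.1 p.2 * h q.1 q.2))
        + ∑ q ∈ E, ((if (p.1 ≠ q.1 ∧ p.1 ≠ q.2 ∧ p.2 ≠ q.1 ∧ p.2 ≠ q.2) then
            (((b - (𝒯.filter (fun T => (p.1 ∈ T ∧ p.2 ∈ T) ∧ (q.1 ∈ T ∧ q.2 ∈ T))).card : ℕ)) : ℂ)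
          else 0) • (h p.1 p.2 * h q.1 q.2)))
        = ∑ p ∈ E, ∑ q ∈ E, (((b : ℂ)) • (h p.1 p.2 * h q.1 q.2)
            + (if p = q then ((a : ℂ) - (b : ℂ)) else 0) • (h p.1 p.2 * h q.1 q.2)) := by
      refine Finset.sum_congr rfl fun p hp => ?_
      rw [← Finset.sum_add_distrib]
      refine Finset.sum_congr rfl fun q hq => ?_
      rw [← add_smul, ← add_smul, hcoef p hp q hq]
    rw [step2, Finset.sum_congr rfl (fun p (hp : p ∈ E) => Finset.sum_add_distrib)]
    rw [Finset.sum_add_distrib]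
    have step3 : ∑ p ∈ E, ∑ q ∈ E, ((b : ℂ)) • (h p.1 p.2 * h q.1 q.2)
        = ((b : ℂ)) • (H * H) := by
      rw [hHdef, Finset.sum_mul_sum, Finset.smul_sum]
      exact Finset.sum_congr rfl fun p _ => (Finset.smul_sum).symm
    have step4 : ∑ p ∈ E, ∑ q ∈ E, (if p = q then ((a : ℂ) - (b : ℂ)) else 0) •
          (h p.1 p.2 * h q.1 q.2)
        = (((a : ℂ)) - (b : ℂ)) • H := by
      have inner : ∀ p ∈ E, ∑ q ∈ E, (if p = q then ((a : ℂ) - (b : ℂ)) else 0) •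
            (h p.1 p.2 * h q.1 q.2) = (((a : ℂ)) - (b : ℂ)) • h p.1 p.2 := by
        intro p hp
        have : ∀ q ∈ E, (if p = q then ((a : ℂ) - (b : ℂ)) else 0) • (h p.1 p.2 * h q.1 q.2)
            = (if p = q then (((a : ℂ) - (b : ℂ)) • (h p.1 p.2 * h q.1 q.2)) else 0) := by
          intro q hq
          by_cases hpq : p = q <;> simp [hpq]
        rw [Finset.sum_congr rfl this, Finset.sum_ite_eq E p
          (fun q => ((a : ℂ) - (b : ℂ)) • (h p.1 p.2 * h q.1 q.2)), if_pos hp,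
          (hproj p.1 p.2 ((hmemE p).1 hp)).2]
      rw [Finset.sum_congr rfl inner, ← Finset.smul_sum, ← hHdef]
    rw [step3, step4, ← Finset.smul_sum, ← hHdef]
    have hscal : ((a : ℂ) - (b : ℂ)) - (Δm : ℂ) * (a : ℂ) = -((((b : ℝ) * c : ℝ)) : ℂ) := by
      have hr : ((a : ℝ) - (b : ℝ)) - Δm * (a : ℝ) = -((b : ℝ) * c) := by linarith [harith]
      calc ((a : ℂ) - (b : ℂ)) - (Δm : ℂ) * (a : ℂ)
          = ((((a : ℝ) - (b : ℝ)) - Δm * (a : ℝ) : ℝ) : ℂ) := by push_cast; ring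
        _ = _ := by rw [hr]; push_cast; ring
    rw [smul_smul, add_sub_assoc, ← sub_smul, hscal, neg_smul, ← sub_eq_add_neg]
  -- positivity of the summands
  have hSumpsd : (∑ T ∈ 𝒯, ((∑ p ∈ E.filter (fun p => p.1 ∈ T ∧ p.2 ∈ T), h p.1 p.2) *
        (∑ q ∈ E.filter (fun q => q.1 ∈ T ∧ q.2 ∈ T), h q.1 q.2)
        - (Δm : ℂ) • (∑ p ∈ E.filter (fun p => p.1 ∈ T ∧ p.2 ∈ T), h p.1 p.2))).PosSemidef := by
    refine psd_sum _ _ fun T hT' => ?_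
    have := hsub T hT'
    rwa [hEfil T] at this
  have hDpsd : D.PosSemidef := by
    rw [hDdef]
    refine psd_sum _ _ fun p hp => psd_sum _ _ fun q hq => ?_
    have hplt := (hmemE p).1 hp
    have hqlt := (hmemE q).1 hq
    by_cases hD4 : (p.1 ≠ q.1 ∧ p.1 ≠ q.2 ∧ p.2 ≠ q.1 ∧ p.2 ≠ q.2)
    · rw [if_pos hD4]
      have hmul : (h p.1 p.2 * h q.1 q.2).PosSemidef :=
        psd_mul_of_commute (hproj p.1 p.2 hplt).1 (hproj p.1 p.2 hplt).2
          (hproj q.1 q.2 hqlt).1 (hproj q.1 q.2 hqlt).2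
          (hcomm p.1 p.2 q.1 q.2 hplt hqlt hD4.1 hD4.2.1 hD4.2.2.1 hD4.2.2.2)
      have := psd_smul_real hmul (Nat.cast_nonneg
        (b - (𝒯.filter (fun T => (p.1 ∈ T ∧ p.2 ∈ T) ∧ (q.1 ∈ T ∧ q.2 ∈ T))).card) : (0:ℝ) ≤ _)
      convert this using 2
      norm_cast
    · rw [if_neg hD4, zero_smul]
      exact Matrix.PosSemidef.zero
  have hbig : (((b : ℂ)) • (H * H) - ((((b : ℝ) * c : ℝ)) : ℂ) • H).PosSemidef := by
    rw [← key]
    exact hSumpsd.add hDpsd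
  -- divide by b
  have hXpsd : (H * H - ((c : ℝ) : ℂ) • H).PosSemidef := by
    have hbne : ((b : ℝ)) ≠ 0 := by positivity
    have e1 : ((((b : ℝ)⁻¹ : ℝ)) : ℂ) * ((b : ℕ) : ℂ) = 1 := by
      push_cast
      rw [inv_mul_cancel₀ (by exact_mod_cast hbne)]
    have e2 : ((((b : ℝ)⁻¹ : ℝ)) : ℂ) * ((((b : ℝ) * c : ℝ)) : ℂ) = ((c : ℝ) : ℂ) := by
      push_cast
      rw [← mul_assoc, inv_mul_cancel₀ (by exact_mod_cast hbne), one_mul]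
    have h2 : H * H - ((c : ℝ) : ℂ) • H
        = ((((b : ℝ)⁻¹ : ℝ)) : ℂ) • (((b : ℂ)) • (H * H) - ((((b : ℝ) * c : ℝ)) : ℂ) • H) := by
      rw [smul_sub, smul_smul, smul_smul, e1, e2, one_smul]
    rw [h2]
    exact psd_smul_real hbig (by positivity)
  -- H itself is PSD
  have hHpsd : H.PosSemidef := by
    rw [hHdef]
    refine psd_sum _ _ fun p hp => ?_
    obtain ⟨h1, h2⟩ := hproj p.1 p.2 ((hmemE p).1 hp)
    have := Matrix.posSemidef_conjTranspose_mul_self (h p.1 p.2)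
    rwa [h1.eq, h2] at this
  refine ⟨hXpsd, ?_⟩
  -- eigenvalue bound
  intro i hi
  set ev : ℝ := hHerm.eigenvalues i with hev
  have hv := hHerm.mulVec_eigenvectorBasis i
  set v : Fin N → ℂ := ⇑(hHerm.eigenvectorBasis i) with hvdef
  have hv' : H.mulVec v = ((ev : ℂ)) • v := by
    rw [hvdef, hev, hv]
    ext x
    simp only [Pi.smul_apply, Complex.real_smul, smul_eq_mul]
    rfl
  have hn1 : ‖hHerm.eigenvectorBasis i‖ = 1 := hHerm.eigenvectorBasis.orthonormal.1 i
  have hnorm : dotProduct (star v) v = 1 := by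
    rw [dotProduct_comm]
    have hinner := EuclideanSpace.inner_eq_star_dotProduct (hHerm.eigenvectorBasis i)
      (hHerm.eigenvectorBasis i)
    rw [inner_self_eq_norm_sq_to_K, hn1] at hinner
    simpa using hinner.symm
  have hPv : (H * H - ((c : ℝ) : ℂ) • H).mulVec v = (((ev ^ 2 - c * ev : ℝ)) : ℂ) • v := by
    rw [Matrix.sub_mulVec, ← Matrix.mulVec_mulVec, hv', Matrix.mulVec_smul, hv',
      Matrix.smul_mulVec, hv', smul_smul, smul_smul, ← sub_smul]
    congr 1
    push_cast
    ring
  have h0 := hXpsd.dotProduct_mulVec_nonneg v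
  rw [hPv, dotProduct_smul, hnorm, smul_eq_mul, mul_one] at h0
  have h1 : (0 : ℝ) ≤ ev ^ 2 - c * ev := Complex.zero_le_real.1 h0
  have h2 : (0 : ℝ) ≤ ev := hHpsd.eigenvalues_nonneg i
  have h3 : 0 < ev := lt_of_le_of_ne h2 (Ne.symm hi)
  nlinarith [h1, h3]
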